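/- If f ∈ L¹(ℝ²,ℍ), then ℱ_s f = ℱ_r(βf) everywhere on ℝ². Moreover, if f is ℂ_i-valued (i.e. its j- and k-components vanish) or f is even with respect to its first variable (f(−x₁,x₂) = f(x₁,x₂)), then ℱ_s f = ℱ_r f. -/

import Mathlib

open MeasureTheory Real ENNReal

noncomputable section

/-- The real quaternions. -/
abbrev Hq := Quaternion ℝ

/-- The imaginary unit `i`. -/
def qi : Hq := ⟨0,1,0,0⟩
/-- The imaginary unit `j`. -/
def qj : Hq := ⟨0,0,1,0⟩
/-- The imaginary unit `k`. -/
def qk : Hq := ⟨0,0,0,1⟩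

/-- For a (unit pure imaginary) quaternion `u`, `e^{uθ} := cos θ + u sin θ`. -/
def qexp (u : Hq) (θ : ℝ) : Hq := (Real.cos θ) • (1 : Hq) + (Real.sin θ) • u

/-- The right-sided quaternion Fourier transform of `f ∈ L¹(ℝ²,ℍ)`. -/
def Fr (f : ℝ × ℝ → Hq) (ω : ℝ × ℝ) : Hq :=
  (1 / (2 * Real.pi)) • ∫ x : ℝ × ℝ, f x * qexp qi (-(ω.1 * x.1)) * qexp qj (-(ω.2 * x.2))

/-- The two-sided quaternion Fourier transform of `f ∈ L¹(ℝ²,ℍ)`. -/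
def Fs (f : ℝ × ℝ → Hq) (ω : ℝ × ℝ) : Hq :=
  (1 / (2 * Real.pi)) • ∫ x : ℝ × ℝ, qexp qi (-(ω.1 * x.1)) * f x * qexp qj (-(ω.2 * x.2))


/-- The transform beta. -/
def betaT (f : ℝ × ℝ → Hq) (x : ℝ × ℝ) : Hq :=
  ⟨(f x).re, (f x).imI, (f (-x.1, x.2)).imJ, (f (-x.1, x.2)).imK⟩

/-- Projection to the `ℂ_i` part. -/
def Pq (q : Hq) : Hq := (2:ℝ)⁻¹ • (q - qi * q * qi)
/-- Projection to the `j,k` part. -/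
def Qq (q : Hq) : Hq := (2:ℝ)⁻¹ • (q + qi * q * qi)

lemma key_mul (q : Hq) (θ : ℝ) :
    qexp qi θ * q = Pq q * qexp qi θ + Qq q * qexp qi (-θ) := by
  ext <;>
    simp [Pq, Qq, qexp, Quaternion.ext_iff] <;>
      simp [qi, Quaternion.re_one, Quaternion.imI_one, Quaternion.imJ_one, Quaternion.imK_one] <;> ring

lemma beta_eq (f : ℝ × ℝ → Hq) (x : ℝ × ℝ) :
    betaT f x = Pq (f x) + Qq (f (-x.1, x.2)) := by
  ext <;> simp [betaT, Pq, Qq] <;> simp [qi] <;> ring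

lemma qexp_cont (u : Hq) : Continuous (qexp u) := by
  unfold qexp; fun_prop

lemma qexp_norm_le (u : Hq) (θ : ℝ) : ‖qexp u θ‖ ≤ 1 + ‖u‖ := by
  calc ‖qexp u θ‖ ≤ ‖(Real.cos θ) • (1 : Hq)‖ + ‖(Real.sin θ) • u‖ := norm_add_le _ _
    _ = |Real.cos θ| * 1 + |Real.sin θ| * ‖u‖ := by
        simp [norm_smul]
    _ ≤ 1 * 1 + 1 * ‖u‖ := by
        gcongr <;> first | exact Real.abs_cos_le_one _ | exact Real.abs_sin_le_one _
    _ = 1 + ‖u‖ := by ring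

lemma integrable_mul_bdd {g E : ℝ × ℝ → Hq} (hg : Integrable g) (hE : Continuous E)
    {C : ℝ} (hC : ∀ x, ‖E x‖ ≤ C) : Integrable (fun x => g x * E x) := by
  have h := hg.smul_essSup (g := E) hE.aestronglyMeasurable (μ := volume) ?_
  · simpa [smul_eq_mul] using h
  · refine ne_top_of_le_ne_top (b := ENNReal.ofReal C) ENNReal.ofReal_ne_top ?_
    refine essSup_le_of_ae_le _ (Filter.Eventually.of_forall fun x => ?_)
    simp only [← ofReal_norm]
    exact ENNReal.ofReal_le_ofReal (hC x)

lemma integrable_mul_qexp {g : ℝ × ℝ → Hq} (hg : Integrable g) (s : ℝ) (ω : ℝ × ℝ) :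
    Integrable (fun x => g x * qexp qi (s * (ω.1 * x.1)) * qexp qj (-(ω.2 * x.2))) := by
  have h : Integrable (fun x : ℝ × ℝ =>
      g x * (qexp qi (s * (ω.1 * x.1)) * qexp qj (-(ω.2 * x.2)))) := by
    refine integrable_mul_bdd hg
      (((qexp_cont qi).comp (by fun_prop)).mul ((qexp_cont qj).comp (by fun_prop)))
      (C := (1 + ‖qi‖) * (1 + ‖qj‖)) fun x => ?_
    calc ‖qexp qi (s * (ω.1 * x.1)) * qexp qj (-(ω.2 * x.2))‖
        ≤ ‖qexp qi (s * (ω.1 * x.1))‖ * ‖qexp qj (-(ω.2 * x.2))‖ := norm_mul_le _ _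
      _ ≤ (1 + ‖qi‖) * (1 + ‖qj‖) := by
          gcongr <;> first
            | exact norm_nonneg _
            | exact qexp_norm_le _ _
  simpa [mul_assoc] using h

lemma refl_mp : MeasurePreserving (fun x : ℝ × ℝ => (-x.1, x.2)) volume volume := by
  have := (Measure.measurePreserving_neg (volume : Measure ℝ)).prod
    (MeasurePreserving.id (volume : Measure ℝ))
  exact this

lemma refl_emb : MeasurableEmbedding (fun x : ℝ × ℝ => (-x.1, x.2)) := by
  have h := (MeasurableEquiv.prodCongr (Homeomorph.neg ℝ).toMeasurableEquiv
    (MeasurableEquiv.refl ℝ)).measurableEmbedding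
  convert h using 1
  rfl

theorem stmt9 (f : ℝ × ℝ → Hq) (hf : Integrable f) :
    (∀ ω : ℝ × ℝ, Fs f ω = Fr (betaT f) ω) ∧
      (((∀ x : ℝ × ℝ, (f x).imJ = 0 ∧ (f x).imK = 0) ∨
          (∀ x : ℝ × ℝ, f (-x.1, x.2) = f x)) →
        ∀ ω : ℝ × ℝ, Fs f ω = Fr f ω) := by
  have hmain : ∀ ω : ℝ × ℝ, Fs f ω = Fr (betaT f) ω := by
    intro ω
    have hP : Integrable (fun x => Pq (f x)) := by
      have := (hf.sub ((hf.const_mul qi).mul_const qi)).smul ((2:ℝ)⁻¹)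
      exact this
    have hQ : Integrable (fun x => Qq (f x)) := by
      have := (hf.add ((hf.const_mul qi).mul_const qi)).smul ((2:ℝ)⁻¹)
      exact this
    have hQr : Integrable (fun x : ℝ × ℝ => Qq (f (-x.1, x.2))) :=
      (refl_mp.integrable_comp_emb refl_emb).mpr hQ
    have hA : Integrable (fun x : ℝ × ℝ =>
        Pq (f x) * qexp qi (-(ω.1 * x.1)) * qexp qj (-(ω.2 * x.2))) := by
      simpa [neg_mul] using integrable_mul_qexp hP (-1) ω
    have hB : Integrable (fun x : ℝ × ℝ =>
        Qq (f x) * qexp qi (ω.1 * x.1) * qexp qj (-(ω.2 * x.2))) := by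
      simpa using integrable_mul_qexp hQ 1 ω
    have hB' : Integrable (fun x : ℝ × ℝ =>
        Qq (f (-x.1, x.2)) * qexp qi (-(ω.1 * x.1)) * qexp qj (-(ω.2 * x.2))) := by
      simpa [neg_mul] using integrable_mul_qexp hQr (-1) ω
    have hchange : (∫ x : ℝ × ℝ, Qq (f x) * qexp qi (ω.1 * x.1) * qexp qj (-(ω.2 * x.2)))
        = ∫ x : ℝ × ℝ, Qq (f (-x.1, x.2)) * qexp qi (-(ω.1 * x.1)) * qexp qj (-(ω.2 * x.2)) := by
      have := refl_mp.integral_comp refl_emb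
        (fun x : ℝ × ℝ => Qq (f x) * qexp qi (ω.1 * x.1) * qexp qj (-(ω.2 * x.2)))
      rw [← this]
      congr 1
      funext x
      simp [mul_neg, neg_mul]
    unfold Fs Fr
    congr 1
    calc (∫ x : ℝ × ℝ, qexp qi (-(ω.1 * x.1)) * f x * qexp qj (-(ω.2 * x.2)))
        = ∫ x : ℝ × ℝ,
            (Pq (f x) * qexp qi (-(ω.1 * x.1)) * qexp qj (-(ω.2 * x.2)) +
             Qq (f x) * qexp qi (ω.1 * x.1) * qexp qj (-(ω.2 * x.2))) := by
          congr 1; funext x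
          rw [key_mul (f x) (-(ω.1 * x.1)), neg_neg, add_mul]
      _ = (∫ x : ℝ × ℝ, Pq (f x) * qexp qi (-(ω.1 * x.1)) * qexp qj (-(ω.2 * x.2))) +
          ∫ x : ℝ × ℝ, Qq (f x) * qexp qi (ω.1 * x.1) * qexp qj (-(ω.2 * x.2)) :=
          integral_add hA hB
      _ = (∫ x : ℝ × ℝ, Pq (f x) * qexp qi (-(ω.1 * x.1)) * qexp qj (-(ω.2 * x.2))) +
          ∫ x : ℝ × ℝ, Qq (f (-x.1, x.2)) * qexp qi (-(ω.1 * x.1)) * qexp qj (-(ω.2 * x.2)) := by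
          rw [hchange]
      _ = ∫ x : ℝ × ℝ,
            (Pq (f x) * qexp qi (-(ω.1 * x.1)) * qexp qj (-(ω.2 * x.2)) +
             Qq (f (-x.1, x.2)) * qexp qi (-(ω.1 * x.1)) * qexp qj (-(ω.2 * x.2))) :=
          (integral_add hA hB').symm
      _ = ∫ x : ℝ × ℝ, betaT f x * qexp qi (-(ω.1 * x.1)) * qexp qj (-(ω.2 * x.2)) := by
          congr 1; funext x
          rw [beta_eq, add_mul, add_mul]
  refine ⟨hmain, fun h ω => ?_⟩
  have hbeta : betaT f = f := by
    funext x
    rcases h with h | h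
    · ext
      · rfl
      · rfl
      · show (f (-x.1, x.2)).imJ = (f x).imJ
        rw [(h _).1, (h x).1]
      · show (f (-x.1, x.2)).imK = (f x).imK
        rw [(h _).2, (h x).2]
    · show (⟨(f x).re, (f x).imI, (f (-x.1, x.2)).imJ, (f (-x.1, x.2)).imK⟩ : Hq) = f x
      rw [h x]; rfl
  rw [hmain ω, hbeta]
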